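/- arXiv:1207.0373 — 2 statements merged into one kernel-verified Lean document; each statement's English description precedes it below -/
import Mathlib

section
/- The van den Berg–Kesten inequality: for a finite product of Bernoulli measures on {0,1}^n and any two increasing events A and B, the probability of the disjoint occurrence A □ B satisfies P(A □ B) ≤ P(A) · P(B). -/
open MeasureTheory

noncomputable section

/-- The cylinder of configurations agreeing with `ω` on `K`. -/
def cylinder {n : ℕ} (ω : Fin n → Bool) (K : Set (Fin n)) : Set (Fin n → Bool) :=
  {ω' | ∀ i ∈ K, ω' i = ω i}

/-- The disjoint occurrence `A □ B`: configurations `ω` admitting disjoint witness sets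
`K, L` of coordinates with `[ω]_K ⊆ A` and `[ω]_L ⊆ B`. -/
def disjOcc {n : ℕ} (A B : Set (Fin n → Bool)) : Set (Fin n → Bool) :=
  {ω | ∃ K L : Set (Fin n), Disjoint K L ∧ cylinder ω K ⊆ A ∧ cylinder ω L ⊆ B}

/-- An increasing event: closed upwards in the coordinatewise partial order. -/
def IncreasingEvent {n : ℕ} (A : Set (Fin n → Bool)) : Prop :=
  ∀ ω ω' : Fin n → Bool, ω ≤ ω' → ω ∈ A → ω' ∈ A

namespace VDBK

open Finset Function
open scoped Classical ENNReal

variable {n : ℕ}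

/-- abbreviation for the configuration space -/
abbrev Cfg (n : ℕ) := Fin n → Bool

lemma bool_le_iff : ∀ a b : Bool, a ≤ b ↔ (a = true → b = true) := by decide

lemma bool_and_not_le : ∀ a b : Bool, (a && !b) ≤ a := by decide

/-- weight of a single configuration -/
def ww (μ : Fin n → Measure Bool) (ω : Cfg n) : ℝ≥0∞ := ∏ i, μ i {ω i}

lemma singleton_eq_pi (ω : Cfg n) :
    ({ω} : Set (Cfg n)) = Set.pi Set.univ (fun i => {ω i}) := by
  ext f
  simp [Set.mem_pi, funext_iff]

lemma measurableSet_all (X : Set (Cfg n)) : MeasurableSet X := by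
  have h1 : ∀ ω : Cfg n, MeasurableSet ({ω} : Set (Cfg n)) := by
    intro ω
    rw [singleton_eq_pi]
    exact MeasurableSet.univ_pi (fun i => measurableSet_singleton _)
  have : X = ⋃ ω ∈ X, {ω} := by simp
  rw [this]
  exact MeasurableSet.biUnion (Set.to_countable _) (fun ω _ => h1 ω)

lemma pi_singleton (μ : Fin n → Measure Bool) [∀ i, IsProbabilityMeasure (μ i)] (ω : Cfg n) :
    Measure.pi μ {ω} = ww μ ω := by
  rw [singleton_eq_pi, Measure.pi_pi]
  rfl

lemma pi_eq_sum (μ : Fin n → Measure Bool) [∀ i, IsProbabilityMeasure (μ i)]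
    (X : Set (Cfg n)) :
    Measure.pi μ X = ∑ ω : Cfg n, if ω ∈ X then ww μ ω else 0 := by
  have hX : X = ⋃ ω ∈ (Finset.univ.filter (· ∈ X)), ({ω} : Set (Cfg n)) := by
    ext f; simp
  conv_lhs => rw [hX]
  rw [measure_biUnion_finset ?_ (fun ω _ => measurableSet_all _)]
  · rw [← Finset.sum_filter]
    exact Finset.sum_congr rfl fun ω _ => pi_singleton μ ω
  · intro a _ b _ hab
    simp only [Set.disjoint_singleton_left, Set.mem_singleton_iff]
    exact hab

/-- weighted "measure" of a set of pairs of configurations -/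
def val (μ : Fin n → Measure Bool) (E : Set (Cfg n × Cfg n)) : ℝ≥0∞ :=
  ∑ z : Cfg n × Cfg n, if z ∈ E then ww μ z.1 * ww μ z.2 else 0

lemma val_prod (μ : Fin n → Measure Bool) [∀ i, IsProbabilityMeasure (μ i)]
    (X Y : Set (Cfg n)) :
    val μ (X ×ˢ Y) = Measure.pi μ X * Measure.pi μ Y := by
  rw [pi_eq_sum, pi_eq_sum, Finset.sum_mul_sum]
  simp only [val]
  rw [Fintype.sum_prod_type]
  refine Finset.sum_congr rfl fun a _ => Finset.sum_congr rfl fun b _ => ?_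
  by_cases hx : a ∈ X <;> by_cases hy : b ∈ Y <;> simp [hx, hy]

/-- hybrid configuration: `ω'` on `S`, `ω` with the witness `σ` removed off `S`. -/
def hyb (S : Finset (Fin n)) (σ ω ω' : Cfg n) : Cfg n :=
  fun i => if i ∈ S then ω' i else ω i && !σ i

/-- interpolating events for the duplication argument -/
def DD (A B : Set (Cfg n)) (S : Finset (Fin n)) : Set (Cfg n × Cfg n) :=
  {z | ∃ σ, σ ≤ z.1 ∧ σ ∈ A ∧ hyb S σ z.1 z.2 ∈ B}

/-- swap the `j`-th coordinate between the two copies -/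
def sw (j : Fin n) (z : Cfg n × Cfg n) : Cfg n × Cfg n :=
  (Function.update z.1 j (z.2 j), Function.update z.2 j (z.1 j))

lemma sw_sw (j : Fin n) (z : Cfg n × Cfg n) : sw j (sw j z) = z := by
  cases z with
  | mk a b =>
    simp only [sw, Function.update_self, Function.update_idem, Prod.mk.injEq]
    constructor <;> funext i <;> by_cases h : i = j <;> simp [h]

lemma ww_update (μ : Fin n → Measure Bool) (ω : Cfg n) (j : Fin n) (b : Bool) :
    ww μ (Function.update ω j b) = μ j {b} * ∏ i ∈ Finset.univ.erase j, μ i {ω i} := by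
  simp only [ww]
  rw [← Finset.mul_prod_erase Finset.univ _ (Finset.mem_univ j), Function.update_self]
  congr 1
  exact Finset.prod_congr rfl fun i hi =>
    by rw [Function.update_of_ne (Finset.ne_of_mem_erase hi)]

lemma ww_sw (μ : Fin n → Measure Bool) (j : Fin n) (z : Cfg n × Cfg n) :
    ww μ (sw j z).1 * ww μ (sw j z).2 = ww μ z.1 * ww μ z.2 := by
  have h1 : ww μ z.1 = μ j {z.1 j} * ∏ i ∈ Finset.univ.erase j, μ i {z.1 i} := by
    simp only [ww]
    rw [← Finset.mul_prod_erase Finset.univ _ (Finset.mem_univ j)]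
  have h2 : ww μ z.2 = μ j {z.2 j} * ∏ i ∈ Finset.univ.erase j, μ i {z.2 i} := by
    simp only [ww]
    rw [← Finset.mul_prod_erase Finset.univ _ (Finset.mem_univ j)]
  simp only [sw]
  rw [ww_update, ww_update, h1, h2]
  ring

/-- canonical-witness characterisation of disjoint occurrence for increasing events -/
lemma disjOcc_iff {A B : Set (Cfg n)} (hA : IncreasingEvent A) (hB : IncreasingEvent B)
    (ω : Cfg n) :
    ω ∈ disjOcc A B ↔ ∃ σ, σ ≤ ω ∧ σ ∈ A ∧ (fun i => ω i && !σ i) ∈ B := by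
  constructor
  · rintro ⟨K, L, hKL, hK, hL⟩
    refine ⟨fun i => if i ∈ K then ω i else false, ?_, ?_, ?_⟩
    · intro i
      by_cases h : i ∈ K <;> simp [h]
    · apply hK
      intro i hi
      simp [hi]
    · apply hL
      intro i hi
      have hiK : i ∉ K := Set.disjoint_right.mp hKL hi
      simp [hiK]
  · rintro ⟨σ, hσ, hσA, hτB⟩
    refine ⟨{i | σ i = true}, {i | (ω i && !σ i) = true}, ?_, ?_, ?_⟩
    · rw [Set.disjoint_left]
      intro i hi hi'
      simp only [Set.mem_setOf_eq] at hi hi'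
      rw [hi] at hi'
      simp at hi'
    · intro ω' hω'
      apply hA σ ω' _ hσA
      intro i
      rw [bool_le_iff]
      intro hi
      have hiK : i ∈ {i | σ i = true} := hi
      rw [hω' i hiK]
      exact (bool_le_iff _ _).mp (hσ i) hi
    · intro ω' hω'
      apply hB (fun i => ω i && !σ i) ω' _ hτB
      intro i
      rw [bool_le_iff]
      intro hi
      rw [hω' i hi]
      exact ((Bool.and_eq_true _ _).mp hi).1

lemma DD_empty {A B : Set (Cfg n)} (hA : IncreasingEvent A) (hB : IncreasingEvent B) :
    DD A B (∅ : Finset (Fin n)) = disjOcc A B ×ˢ (Set.univ : Set (Cfg n)) := by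
  ext z
  simp only [DD, Set.mem_setOf_eq, Set.mem_prod, Set.mem_univ, and_true,
    disjOcc_iff hA hB]
  constructor
  · rintro ⟨σ, h1, h2, h3⟩
    have hh : hyb ∅ σ z.1 z.2 = fun i => z.1 i && !σ i := by funext i; simp [hyb]
    exact ⟨σ, h1, h2, by rw [hh] at h3; exact h3⟩
  · rintro ⟨σ, h1, h2, h3⟩
    have hh : hyb ∅ σ z.1 z.2 = fun i => z.1 i && !σ i := by funext i; simp [hyb]
    exact ⟨σ, h1, h2, by rw [hh]; exact h3⟩

lemma DD_univ {A B : Set (Cfg n)} (hA : IncreasingEvent A) :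
    DD A B (Finset.univ : Finset (Fin n)) = A ×ˢ B := by
  ext z
  simp only [DD, Set.mem_setOf_eq, Set.mem_prod]
  have hh : ∀ σ : Cfg n, hyb Finset.univ σ z.1 z.2 = z.2 := by
    intro σ; funext i; simp [hyb]
  constructor
  · rintro ⟨σ, h1, h2, h3⟩
    rw [hh] at h3
    exact ⟨hA σ z.1 h1 h2, h3⟩
  · rintro ⟨h1, h2⟩
    exact ⟨z.1, le_refl _, h1, by rw [hh]; exact h2⟩

section Step

variable {A B : Set (Cfg n)} (hB : IncreasingEvent B) {j : Fin n} {S : Finset (Fin n)}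
  (hj : j ∉ S)

include hB hj

/-- if the witness avoids coordinate `j`, the swapped pair is in the next event -/
lemma claim3 (z : Cfg n × Cfg n) (σ : Cfg n) (h1 : σ ≤ z.1) (h2 : σ ∈ A)
    (h3 : hyb S σ z.1 z.2 ∈ B) (hσj : σ j = false) :
    sw j z ∈ DD A B (insert j S) := by
  refine ⟨σ, ?_, h2, ?_⟩
  · intro i
    by_cases h : i = j
    · subst h; simp [sw, hσj]
    · simpa [sw, Function.update_of_ne h] using h1 i
  · apply hB (hyb S σ z.1 z.2) _ _ h3
    intro i
    by_cases h : i = j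
    · subst h
      simp [hyb, sw, hj, hσj]
    · by_cases hS : i ∈ S <;>
        simp [hyb, sw, h, hS, Function.update_of_ne h]

/-- if the witness uses coordinate `j`, the pair itself is in the next event -/
lemma claim2 (z : Cfg n × Cfg n) (σ : Cfg n) (h1 : σ ≤ z.1) (h2 : σ ∈ A)
    (h3 : hyb S σ z.1 z.2 ∈ B) (hσj : σ j = true) :
    z ∈ DD A B (insert j S) := by
  refine ⟨σ, h1, h2, ?_⟩
  apply hB (hyb S σ z.1 z.2) _ _ h3
  intro i
  by_cases h : i = j
  · subst h; simp [hyb, hj, hσj]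
  · by_cases hS : i ∈ S <;> simp [hyb, h, hS]

/-- membership transfers except possibly at pattern (true, false) -/
lemma claim1 (z : Cfg n × Cfg n) (hz : z ∈ DD A B S)
    (hpat : z.1 j = false ∨ z.2 j = true) :
    z ∈ DD A B (insert j S) := by
  obtain ⟨σ, h1, h2, h3⟩ := hz
  refine ⟨σ, h1, h2, ?_⟩
  apply hB (hyb S σ z.1 z.2) _ _ h3
  intro i
  by_cases h : i = j
  · subst h
    rcases hpat with hp | hp <;> simp [hyb, hj, hp, bool_le_iff]
  · by_cases hS : i ∈ S <;> simp [hyb, h, hS]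

/-- key rigidity: at pattern (true,false), if the swap is in `DD A B S`,
then the original is in the next event. -/
lemma claim4 (z : Cfg n × Cfg n) (hx : z.1 j = true) (hy : z.2 j = false)
    (hsw : sw j z ∈ DD A B S) :
    z ∈ DD A B (insert j S) := by
  obtain ⟨σ, h1, h2, h3⟩ := hsw
  have hσj : σ j = false := by
    have h := h1 j
    simp only [sw, Function.update_self, hy] at h
    rcases hb : σ j with _ | _
    · rfl
    · rw [hb] at h; exact absurd h (by decide : ¬ (true ≤ false))
  refine ⟨σ, ?_, h2, ?_⟩
  · intro i
    by_cases h : i = j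
    · subst h; simp [hσj, hx]
    · have := h1 i
      simpa [sw, Function.update_of_ne h] using this
  · apply hB (hyb S σ (sw j z).1 (sw j z).2) _ _ h3
    intro i
    by_cases h : i = j
    · subst h
      simp [hyb, sw, hj, hy, hσj]
    · by_cases hS : i ∈ S <;>
        simp [hyb, sw, h, hS, Function.update_of_ne h]

lemma swEF (z : Cfg n × Cfg n) (hE : sw j z ∈ DD A B S)
    (hF : sw j z ∉ DD A B (insert j S)) : z ∈ DD A B (insert j S) := by
  obtain ⟨σ, h1, h2, h3⟩ := hE
  rcases hσj : σ j with _ | _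
  · have := claim3 hB hj (sw j z) σ h1 h2 h3 hσj
    rwa [sw_sw] at this
  · exact absurd (claim2 hB hj (sw j z) σ h1 h2 h3 hσj) hF

lemma patEF (z : Cfg n × Cfg n) (hE : z ∈ DD A B S)
    (hF : z ∉ DD A B (insert j S)) : z.1 j = true ∧ z.2 j = false := by
  by_contra hc
  apply hF
  apply claim1 hB hj z hE
  rcases hb : z.1 j with _ | _
  · exact Or.inl rfl
  · rcases hb' : z.2 j with _ | _
    · exact absurd ⟨hb, hb'⟩ hc
    · exact Or.inr rfl

lemma notBoth (z : Cfg n × Cfg n) (h1 : z ∈ DD A B S) (h2 : z ∈ DD A B (insert j S))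
    (h3 : sw j z ∈ DD A B S) (h4 : sw j z ∉ DD A B (insert j S)) : False := by
  obtain ⟨hx, hy⟩ := patEF hB hj (sw j z) h3 h4
  apply h4
  apply claim4 hB hj (sw j z) hx hy
  rw [sw_sw]
  exact h1

lemma step (μ : Fin n → Measure Bool) :
    val μ (DD A B S) ≤ val μ (DD A B (insert j S)) := by
  set E := DD A B S with hE
  set F := DD A B (insert j S) with hF
  set W : Cfg n × Cfg n → ℝ≥0∞ := fun z => ww μ z.1 * ww μ z.2 with hW
  have hinv : Function.Involutive (sw j) := sw_sw j
  have hsplit : val μ E =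
      ∑ z : Cfg n × Cfg n, ((if z ∈ E ∧ z ∈ F then W z else 0)
        + (if sw j z ∈ E ∧ sw j z ∉ F then W z else 0)) := by
    have h2 : (∑ z : Cfg n × Cfg n, if sw j z ∈ E ∧ sw j z ∉ F then W z else 0)
        = ∑ z : Cfg n × Cfg n, if z ∈ E ∧ z ∉ F then W z else 0 := by
      rw [← Equiv.sum_comp (Function.Involutive.toPerm (sw j) hinv)
        (fun z => if sw j z ∈ E ∧ sw j z ∉ F then W z else 0)]
      refine Finset.sum_congr rfl fun z _ => ?_
      have h1 : (Function.Involutive.toPerm (sw j) hinv) z = sw j z := rfl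
      rw [h1, hinv z]
      by_cases hc : z ∈ E ∧ z ∉ F
      · rw [if_pos hc, if_pos hc]
        show ww μ (sw j z).1 * ww μ (sw j z).2 = ww μ z.1 * ww μ z.2
        exact ww_sw μ j z
      · rw [if_neg hc, if_neg hc]
    rw [Finset.sum_add_distrib, h2, ← Finset.sum_add_distrib, val]
    refine Finset.sum_congr rfl fun z _ => ?_
    by_cases hzE : z ∈ E
    · by_cases hzF : z ∈ F
      · rw [if_pos hzE, if_pos ⟨hzE, hzF⟩, if_neg (fun hc => hc.2 hzF), add_zero]
      · rw [if_pos hzE, if_neg (fun hc => hzF hc.2), if_pos ⟨hzE, hzF⟩, zero_add]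
    · rw [if_neg hzE, if_neg (fun hc => hzE hc.1), if_neg (fun hc => hzE hc.1), add_zero]
  rw [hsplit]
  have hvalF : val μ F = ∑ z : Cfg n × Cfg n, if z ∈ F then W z else 0 := rfl
  rw [hvalF]
  refine Finset.sum_le_sum fun z _ => ?_
  by_cases h1 : z ∈ E ∧ z ∈ F <;> by_cases h2 : sw j z ∈ E ∧ sw j z ∉ F
  · exact absurd (notBoth hB hj z h1.1 h1.2 h2.1 h2.2) (not_false)
  · rw [if_pos h1, if_neg h2, if_pos h1.2, add_zero]
  · rw [if_neg h1, if_pos h2, if_pos (swEF hB hj z h2.1 h2.2), zero_add]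
  · rw [if_neg h1, if_neg h2, add_zero]
    exact zero_le

end Step

lemma chain {A B : Set (Cfg n)} (hB : IncreasingEvent B) (μ : Fin n → Measure Bool)
    (S : Finset (Fin n)) :
    val μ (DD A B (∅ : Finset (Fin n))) ≤ val μ (DD A B S) := by
  induction S using Finset.induction_on with
  | empty => exact le_refl _
  | insert _ _ hj ih => exact ih.trans (step hB hj μ)

end VDBK

/-- **The van den Berg–Kesten inequality**: for a product of Bernoulli measures on `{0,1}ⁿ`
and increasing events `A, B`, one has `P(A □ B) ≤ P(A) · P(B)`. -/
theorem vdBerg_Kesten {n : ℕ} (μ : Fin n → Measure Bool)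
    [∀ i, IsProbabilityMeasure (μ i)]
    (A B : Set (Fin n → Bool))
    (hA : MeasurableSet A) (hB : MeasurableSet B)
    (hAinc : IncreasingEvent A) (hBinc : IncreasingEvent B) :
    Measure.pi μ (disjOcc A B) ≤ Measure.pi μ A * Measure.pi μ B := by
  calc Measure.pi μ (disjOcc A B)
      = Measure.pi μ (disjOcc A B) * Measure.pi μ Set.univ := by
        rw [measure_univ, mul_one]
    _ = VDBK.val μ (VDBK.DD A B (∅ : Finset (Fin n))) := by
        rw [← VDBK.val_prod, VDBK.DD_empty hAinc hBinc]
    _ ≤ VDBK.val μ (VDBK.DD A B (Finset.univ : Finset (Fin n))) :=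
        VDBK.chain hBinc μ _
    _ = Measure.pi μ A * Measure.pi μ B := by
        rw [VDBK.DD_univ hAinc, VDBK.val_prod]

end
end

section
/- Lipschitz percolation: for bond-free site percolation on Z^d (d ≥ 2) in which each site is open with probability p independently, there exists p < 1 such that, almost surely, there is a (random) Lipschitz function F : Z^{d−1} → Z with |F(x) − F(y)| ≤ 1 whenever |x − y| = 1, such that every site (x, F(x)) is open. -/
open MeasureTheory Filter ProbabilityTheory Topology
open scoped ENNReal

noncomputable section

abbrev LPSite (k : ℕ) := (Fin k → ℤ) × ℤ
abbrev LPMove (k : ℕ) := Bool × Option (Fin k × Bool)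

def LPoff {k : ℕ} : Option (Fin k × Bool) → (Fin k → ℤ)
  | none => fun _ => 0
  | some (i, s) => fun j => if j = i then (if s then 1 else -1) else 0

def LPprev {k : ℕ} (m : LPMove k) (v : LPSite k) : LPSite k :=
  (fun i => v.1 i - LPoff m.2 i, v.2 + (if m.1 then -1 else 1))

inductive LPReach {k : ℕ} (c : LPSite k → Prop) : LPSite k → Prop
  | base (v : LPSite k) : v.2 ≤ 0 → LPReach c v
  | up (m : LPMove k) (v : LPSite k) : m.1 = true → c v → LPReach c (LPprev m v) → LPReach c v
  | down (m : LPMove k) (v : LPSite k) : m.1 = false → LPReach c (LPprev m v) → LPReach c v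

def LPGood {k : ℕ} (c : LPSite k → Prop) : LPSite k → List (LPMove k) → Prop
  | v, [] => v.2 ≤ 0
  | v, m :: ms => (m.1 = true → c v) ∧ LPGood c (LPprev m v) ms

def LPTrace {k : ℕ} : LPSite k → List (LPMove k) → List (LPSite k)
  | v, [] => [v]
  | v, m :: ms => v :: LPTrace (LPprev m v) ms

def LPUp {k : ℕ} : LPSite k → List (LPMove k) → Finset (LPSite k)
  | _, [] => ∅
  | v, m :: ms => (if m.1 then {v} else ∅) ∪ LPUp (LPprev m v) ms

def LPupCount {k : ℕ} (ms : List (LPMove k)) : ℕ := (ms.filter (fun m => m.1)).length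

def LPend {k : ℕ} (v : LPSite k) (ms : List (LPMove k)) : LPSite k :=
  ms.foldl (fun u m => LPprev m u) v

variable {k : ℕ} {c : LPSite k → Prop} {v : LPSite k}

@[simp] lemma lpend_nil : LPend v ([] : List (LPMove k)) = v := rfl
@[simp] lemma lpend_cons (m : LPMove k) (ms : List (LPMove k)) :
    LPend v (m :: ms) = LPend (LPprev m v) ms := rfl

lemma lpreach_good : LPReach c v → ∃ ms, LPGood c v ms := by
  intro h
  induction h with
  | base v hv => exact ⟨[], hv⟩
  | up m v hm hc _ ih =>
      obtain ⟨ms, hms⟩ := ih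
      exact ⟨m :: ms, fun _ => hc, hms⟩
  | down m v hm _ ih =>
      obtain ⟨ms, hms⟩ := ih
      exact ⟨m :: ms, fun h => by simp [hm] at h, hms⟩

lemma lpgood_suffix : ∀ (l₁ l₂ : List (LPMove k)) (v : LPSite k),
    LPGood c v (l₁ ++ l₂) → LPGood c (LPend v l₁) l₂ := by
  intro l₁
  induction l₁ with
  | nil => intro l₂ v h; simpa using h
  | cons m l₁ ih => intro l₂ v h; exact ih l₂ (LPprev m v) h.2

lemma lpgood_splice : ∀ (l₁ l₂ l₃ : List (LPMove k)) (v : LPSite k),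
    LPGood c v (l₁ ++ l₂) → LPGood c (LPend v l₁) l₃ → LPGood c v (l₁ ++ l₃) := by
  intro l₁
  induction l₁ with
  | nil => intro l₂ l₃ v _ h₃; simpa using h₃
  | cons m l₁ ih => intro l₂ l₃ v h h₃; exact ⟨h.1, ih l₂ l₃ (LPprev m v) h.2 h₃⟩

@[simp] lemma lptrace_length (ms : List (LPMove k)) : ∀ v, (LPTrace v ms).length = ms.length + 1 := by
  induction ms with
  | nil => intro v; rfl
  | cons m ms ih => intro v; simp [LPTrace, ih]

lemma lptrace_get (ms : List (LPMove k)) : ∀ (v : LPSite k) (i : ℕ) (hi : i < (LPTrace v ms).length),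
    (LPTrace v ms).get ⟨i, hi⟩ = LPend v (ms.take i) := by
  induction ms with
  | nil =>
      intro v i hi
      simp [LPTrace] at hi
      subst hi; rfl
  | cons m ms ih =>
      intro v i hi
      cases i with
      | zero => rfl
      | succ i =>
          simp only [LPTrace, List.get_cons_succ, List.take_succ_cons, lpend_cons]
          exact ih (LPprev m v) i _

lemma lperase : ∀ (n : ℕ) (ms : List (LPMove k)), ms.length ≤ n → LPGood c v ms →
    ∃ ms', LPGood c v ms' ∧ (LPTrace v ms').Nodup := by
  intro n
  induction n with
  | zero =>
      intro ms hlen hg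
      refine ⟨ms, hg, ?_⟩
      rw [List.length_eq_zero_iff.mp (Nat.le_zero.mp hlen)]
      simp [LPTrace]
  | succ n ih =>
      intro ms hlen hg
      by_cases hnd : (LPTrace v ms).Nodup
      · exact ⟨ms, hg, hnd⟩
      · rw [List.nodup_iff_injective_get] at hnd
        simp only [Function.Injective] at hnd
        push_neg at hnd
        obtain ⟨i, j, hij, hne⟩ := hnd
        have hi : i.1 < ms.length + 1 := lt_of_lt_of_eq i.2 (lptrace_length ms v)
        have hj : j.1 < ms.length + 1 := lt_of_lt_of_eq j.2 (lptrace_length ms v)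
        rcases (Ne.lt_or_gt hne) with h | h
        · have hlt : i.1 < j.1 := h
          have hkey : LPend v (ms.take i.1) = LPend v (ms.take j.1) := by
            rw [← lptrace_get ms v i.1 i.2, ← lptrace_get ms v j.1 j.2]; exact hij
          refine ih (ms.take i.1 ++ ms.drop j.1) ?_ ?_
          · simp only [List.length_append, List.length_take, List.length_drop]
            omega
          · have h1 : LPGood c v (ms.take i.1 ++ ms.drop i.1) := by
              rw [List.take_append_drop]; exact hg
            have h2 : LPGood c (LPend v (ms.take j.1)) (ms.drop j.1) := by
              have := lpgood_suffix (c := c) (ms.take j.1) (ms.drop j.1) v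
              rw [List.take_append_drop] at this
              exact this hg
            exact lpgood_splice _ _ _ v h1 (hkey ▸ h2)
        · have hlt : j.1 < i.1 := h
          have hkey : LPend v (ms.take j.1) = LPend v (ms.take i.1) := by
            rw [← lptrace_get ms v i.1 i.2, ← lptrace_get ms v j.1 j.2]; exact hij.symm
          refine ih (ms.take j.1 ++ ms.drop i.1) ?_ ?_
          · simp only [List.length_append, List.length_take, List.length_drop]
            omega
          · have h1 : LPGood c v (ms.take j.1 ++ ms.drop j.1) := by
              rw [List.take_append_drop]; exact hg
            have h2 : LPGood c (LPend v (ms.take i.1)) (ms.drop i.1) := by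
              have := lpgood_suffix (c := c) (ms.take i.1) (ms.drop i.1) v
              rw [List.take_append_drop] at this
              exact this hg
            exact lpgood_splice _ _ _ v h1 (hkey ▸ h2)

def LPdownCount {k : ℕ} (ms : List (LPMove k)) : ℕ := (ms.filter (fun m => !m.1)).length

lemma lpcount_total (ms : List (LPMove k)) : LPupCount ms + LPdownCount ms = ms.length := by
  induction ms with
  | nil => rfl
  | cons m ms ih =>
      unfold LPupCount LPdownCount at *
      cases hm : m.1 <;> simp [List.filter_cons, hm] <;> omega

lemma lpup_closed : ∀ (ms : List (LPMove k)) (v : LPSite k), LPGood c v ms →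
    ∀ u ∈ LPUp v ms, c u := by
  intro ms
  induction ms with
  | nil => intro v _ u hu; simp [LPUp] at hu
  | cons m ms ih =>
      intro v hg u hu
      simp only [LPUp, Finset.mem_union] at hu
      rcases hu with hu | hu
      · rcases hm : m.1 with _ | _
        · simp [hm] at hu
        · simp [hm] at hu; subst hu; exact hg.1 hm
      · exact ih (LPprev m v) hg.2 u hu

lemma lpup_subset_trace : ∀ (ms : List (LPMove k)) (v : LPSite k),
    ∀ u ∈ LPUp v ms, u ∈ LPTrace v ms := by
  intro ms
  induction ms with
  | nil => intro v u hu; simp [LPUp] at hu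
  | cons m ms ih =>
      intro v u hu
      simp only [LPUp, Finset.mem_union] at hu
      simp only [LPTrace, List.mem_cons]
      rcases hu with hu | hu
      · rcases hm : m.1 with _ | _
        · simp [hm] at hu
        · simp [hm] at hu; exact Or.inl hu
      · exact Or.inr (ih (LPprev m v) u hu)

lemma lpup_card : ∀ (ms : List (LPMove k)) (v : LPSite k), (LPTrace v ms).Nodup →
    (LPUp v ms).card = LPupCount ms := by
  intro ms
  induction ms with
  | nil => intro v _; rfl
  | cons m ms ih =>
      intro v hnd
      simp only [LPTrace, List.nodup_cons] at hnd
      rcases hm : m.1 with _ | _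
      · have : LPUp v (m :: ms) = LPUp (LPprev m v) ms := by simp [LPUp, hm]
        rw [this, ih (LPprev m v) hnd.2]
        unfold LPupCount
        simp [List.filter_cons, hm]
      · have hvn : v ∉ LPUp (LPprev m v) ms := fun hv =>
          hnd.1 (lpup_subset_trace ms (LPprev m v) v hv)
        have : LPUp v (m :: ms) = insert v (LPUp (LPprev m v) ms) := by
          simp [LPUp, hm]
        rw [this, Finset.card_insert_of_notMem hvn, ih (LPprev m v) hnd.2]
        unfold LPupCount
        simp [List.filter_cons, hm]

lemma lpend_height : ∀ (ms : List (LPMove k)) (v : LPSite k),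
    (LPend v ms).2 = v.2 - LPupCount ms + LPdownCount ms := by
  intro ms
  induction ms with
  | nil => intro v; simp [LPupCount, LPdownCount]
  | cons m ms ih =>
      intro v
      rw [lpend_cons, ih (LPprev m v)]
      unfold LPupCount LPdownCount LPprev
      cases hm : m.1 <;> simp [List.filter_cons, hm] <;> push_cast <;> ring

lemma lpgood_end_nonpos : ∀ (ms : List (LPMove k)) (v : LPSite k),
    LPGood c v ms → (LPend v ms).2 ≤ 0 := by
  intro ms
  induction ms with
  | nil => intro v h; exact h
  | cons m ms ih => intro v h; exact ih (LPprev m v) h.2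

lemma lpgood_counts {h : ℕ} {x : Fin k → ℤ} {ms : List (LPMove k)}
    (hg : LPGood c (x, (h : ℤ)) ms) :
    h ≤ LPupCount ms ∧ ms.length + h ≤ 2 * LPupCount ms := by
  have h1 := lpgood_end_nonpos ms (x, (h : ℤ)) hg
  rw [lpend_height] at h1
  have h2 := lpcount_total ms
  simp only at h1
  omega

lemma lp_unit {k : ℕ} (f : Fin k → ℤ) (hf : (∑ i, |f i|) = 1) :
    ∃ o : Option (Fin k × Bool), ∀ j, f j = LPoff o j := by
  have hnonneg : ∀ j ∈ Finset.univ, (0:ℤ) ≤ |f j| := fun j _ => abs_nonneg _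
  have hex : ∃ i, f i ≠ 0 := by
    by_contra hc
    push_neg at hc
    simp [hc] at hf
  obtain ⟨i, hi⟩ := hex
  have hle : |f i| ≤ ∑ j, |f j| := Finset.single_le_sum hnonneg (Finset.mem_univ i)
  have h1 : |f i| = 1 := le_antisymm (hf ▸ hle) (by
    have : (1:ℤ) ≤ |f i| := Int.one_le_abs (by simpa using hi)
    exact this)
  have hrest : ∀ j, j ≠ i → f j = 0 := by
    intro j hj
    have hsplit : (∑ l, |f l|) = |f i| + ∑ l ∈ Finset.univ.erase i, |f l| :=
      (Finset.add_sum_erase _ _ (Finset.mem_univ i)).symm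
    have hzero : (∑ l ∈ Finset.univ.erase i, |f l|) = 0 := by
      rw [hsplit, h1] at hf; omega
    have := (Finset.sum_eq_zero_iff_of_nonneg (fun l _ => abs_nonneg (f l))).mp hzero j
      (Finset.mem_erase.mpr ⟨hj, Finset.mem_univ j⟩)
    exact abs_eq_zero.mp this
  rcases (abs_eq (by norm_num : (0:ℤ) ≤ 1)).mp h1 with h | h
  · exact ⟨some (i, true), fun j => by
      by_cases hj : j = i
      · subst hj; simp [LPoff, h]
      · simp [LPoff, hj, hrest j hj]⟩
  · exact ⟨some (i, false), fun j => by
      by_cases hj : j = i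
      · subst hj; simp [LPoff, h]
      · simp [LPoff, hj, hrest j hj]⟩

lemma lpreach_down {x : Fin k → ℤ} {h : ℤ} (hr : LPReach c (x, h)) :
    LPReach c (x, h - 1) := by
  refine LPReach.down (false, none) (x, h - 1) rfl ?_
  have : LPprev ((false, none) : LPMove k) (x, h - 1) = (x, h) := by
    unfold LPprev
    refine Prod.ext ?_ ?_
    · funext i; simp [LPoff]
    · simp; all_goals ring
  rw [this]; exact hr

lemma lpreach_mono {x : Fin k → ℤ} {h h' : ℤ} (hle : h' ≤ h) (hr : LPReach c (x, h)) :
    LPReach c (x, h') := by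
  have : ∀ n : ℕ, LPReach c (x, h - n) := by
    intro n
    induction n with
    | zero => simpa using hr
    | succ n ih =>
        have := lpreach_down ih
        have he : h - (n:ℤ) - 1 = h - ((n:ℕ)+1 : ℕ) := by push_cast; ring
        rwa [he] at this
  have hh : h' = h - ((h - h').toNat : ℕ) := by omega
  rw [hh]; exact this _

lemma lpreach_up_self {x : Fin k → ℤ} {h : ℤ} (hc : c (x, h))
    (hr : LPReach c (x, h - 1)) : LPReach c (x, h) := by
  refine LPReach.up (true, none) (x, h) rfl hc ?_
  have : LPprev ((true, none) : LPMove k) (x, h) = (x, h - 1) := by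
    unfold LPprev
    refine Prod.ext ?_ ?_
    · funext i; simp [LPoff]
    · simp; all_goals ring
  rw [this]; exact hr

lemma lpreach_step {x y : Fin k → ℤ} {h : ℤ} (hxy : (∑ i, |x i - y i|) = 1)
    (hr : LPReach c (x, h)) : LPReach c (y, h - 1) := by
  obtain ⟨o, ho⟩ := lp_unit (fun i => y i - x i) (by
    rw [← hxy]; exact Finset.sum_congr rfl (fun i _ => abs_sub_comm _ _))
  refine LPReach.down (false, o) (y, h - 1) rfl ?_
  have : LPprev ((false, o) : LPMove k) (y, h - 1) = (x, h) := by
    unfold LPprev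
    refine Prod.ext ?_ ?_
    · funext i
      simp only
      rw [← ho i]
      ring
    · simp; all_goals ring
  rw [this]; exact hr

lemma lpF_exists (c : LPSite k → Prop)
    (hfin : ∀ x : Fin k → ℤ, ∃ h : ℕ, ¬ LPReach c (x, (h : ℤ))) :
    ∃ F : (Fin k → ℤ) → ℤ,
      (∀ x y : Fin k → ℤ, (∑ i, |x i - y i|) = 1 → |F x - F y| ≤ 1) ∧
      ∀ x : Fin k → ℤ, ¬ c (x, F x) := by
  classical
  have hmin : ∀ x : Fin k → ℤ, ∃ lb : ℤ, ¬ LPReach c (x, lb) ∧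
      ∀ z : ℤ, ¬ LPReach c (x, z) → lb ≤ z := by
    intro x
    apply Int.exists_least_of_bdd
    · refine ⟨0, fun z hz => ?_⟩
      by_contra hneg
      exact hz (LPReach.base (x, z) (by omega))
    · obtain ⟨h, hh⟩ := hfin x
      exact ⟨(h : ℤ), hh⟩
  choose F hF hFmin using hmin
  have hbelow : ∀ (x : Fin k → ℤ) (z : ℤ), z < F x → LPReach c (x, z) := by
    intro x z hz
    by_contra hc
    exact absurd (hFmin x z hc) (by omega)
  have hnb : ∀ x y : Fin k → ℤ, (∑ i, |x i - y i|) = 1 → F x ≤ F y + 1 := by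
    intro x y hxy
    by_contra hgt
    push_neg at hgt
    have h1 : LPReach c (x, F x - 1) := hbelow x _ (by omega)
    have h2 : LPReach c (y, F x - 1 - 1) := lpreach_step hxy h1
    have h3 : LPReach c (y, F y) := lpreach_mono (by omega) h2
    exact hF y h3
  refine ⟨F, ?_, ?_⟩
  · intro x y hxy
    have h1 := hnb x y hxy
    have h2 := hnb y x (by rw [← hxy]; exact Finset.sum_congr rfl (fun i _ => abs_sub_comm _ _))
    rw [abs_le]
    omega
  · intro x hc
    have h1 : LPReach c (x, F x - 1) := hbelow x _ (by omega)
    exact hF x (lpreach_up_self hc h1)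

lemma lp_tsum_list {α : Type} [Fintype α] (r : ℝ≥0∞) :
    (∑' l : List α, r ^ l.length) = ∑' n : ℕ, (Fintype.card α : ℝ≥0∞) ^ n * r ^ n := by
  classical
  rw [← Equiv.tsum_eq (Equiv.sigmaFiberEquiv (List.length : List α → ℕ))
    (fun l => r ^ l.length)]
  rw [ENNReal.tsum_sigma']
  congr 1
  funext n
  have hstep : (∑' l : {l : List α // l.length = n},
      r ^ ((Equiv.sigmaFiberEquiv (List.length : List α → ℕ)) ⟨n, l⟩).length)
      = ∑' _ : List.Vector α n, r ^ n :=
    tsum_congr (fun l => by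
      simp only [Equiv.sigmaFiberEquiv, Equiv.coe_fn_mk, l.2])
  rw [hstep, tsum_fintype, Finset.sum_const, Finset.card_univ, card_vector, nsmul_eq_mul]
  push_cast
  ring

/-- **Lipschitz percolation (Dirr–Dondl–Grimmett–Holroyd–Scheutzow)**: for site percolation
on `ℤ^d = ℤ^{d-1} × ℤ` (`d ≥ 2`) there exists `p < 1` such that, whenever each site is open
independently with probability `p`, almost surely there is a Lipschitz function
`F : ℤ^{d-1} → ℤ` (with `|F(x) - F(y)| ≤ 1` for neighbouring `x, y`) all of whose graph
sites `(x, F(x))` are open. -/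
theorem lipschitz_percolation {d : ℕ} (hd : 2 ≤ d) :
    ∃ p : ℝ, p < 1 ∧
      ∀ (Ω : Type) (mΩ : MeasurableSpace Ω) (P : Measure Ω),
        IsProbabilityMeasure P →
        ∀ X : (Fin (d - 1) → ℤ) × ℤ → Ω → Bool,
        (∀ v, Measurable (X v)) →
        iIndepFun X P →
        (∀ v, P {ω | X v ω = true} = ENNReal.ofReal p) →
        ∀ᵐ ω ∂P, ∃ F : (Fin (d - 1) → ℤ) → ℤ,
          (∀ x y : Fin (d - 1) → ℤ, (∑ i, |x i - y i|) = 1 → |F x - F y| ≤ 1) ∧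
          ∀ x : Fin (d - 1) → ℤ, X (x, F x) ω = true := by

  classical
  set C : ℕ := Fintype.card (LPMove (d - 1)) with hC
  have hCpos : 0 < C := Fintype.card_pos_iff.mpr ⟨(true, none)⟩
  set r : ℝ := ((2 * C : ℕ) : ℝ)⁻¹ with hrdef
  have h2C : (2 : ℝ) ≤ ((2 * C : ℕ) : ℝ) := by
    have : 2 ≤ 2 * C := by omega
    exact_mod_cast this
  have hr0 : 0 < r := by
    rw [hrdef]
    positivity
  have hrhalf : r ≤ 1 / 2 := by
    rw [hrdef]
    rw [inv_le_iff_one_le_mul₀ (by linarith)]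
    linarith
  set q : ℝ := r ^ 2 with hqdef
  have hq0 : 0 < q := by positivity
  have hq1 : q ≤ 1 := by nlinarith
  refine ⟨1 - q, by linarith, ?_⟩
  intro Ω mΩ P hP X hXm hind hp
  set rE : ℝ≥0∞ := ENNReal.ofReal r with hrE
  have hrE_half : rE ≤ 1 / 2 := by
    rw [hrE]
    calc ENNReal.ofReal r ≤ ENNReal.ofReal (1 / 2) := ENNReal.ofReal_le_ofReal hrhalf
      _ = 1 / 2 := by
          rw [ENNReal.ofReal_div_of_pos (by norm_num)]
          norm_num
  have hrE1 : rE ≤ 1 := le_trans hrE_half (by norm_num)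
  have hrE_lt1 : rE < 1 := lt_of_le_of_lt hrE_half (by norm_num)
  -- single site closed probability
  have hfalse : ∀ v, P {ω | X v ω = false} = rE ^ 2 := by
    intro v
    have hmeas : MeasurableSet {ω | X v ω = true} :=
      hXm v (MeasurableSet.singleton true)
    have hcompl : {ω | X v ω = false} = {ω | X v ω = true}ᶜ := by
      ext ω
      simp only [Set.mem_setOf_eq, Set.mem_compl_iff, Bool.not_eq_true]
    rw [hcompl, prob_compl_eq_one_sub hmeas, hp v]
    have hadd : ENNReal.ofReal (1 - q) + ENNReal.ofReal q = 1 := by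
      rw [← ENNReal.ofReal_add (by linarith) hq0.le]
      norm_num
    have : (1 : ℝ≥0∞) - ENNReal.ofReal (1 - q) = ENNReal.ofReal q :=
      ENNReal.sub_eq_of_eq_add (by simp) (by rw [← hadd]; ring)
    rw [this, hqdef, ENNReal.ofReal_pow hr0.le]
  -- finite intersections
  have hfinset : ∀ S : Finset (LPSite (d - 1)),
      P (⋂ v ∈ S, {ω | X v ω = false}) = (rE ^ 2) ^ S.card := by
    intro S
    have := hind.meas_biInter (S := S) (s := fun v => {ω | X v ω = false})
      (fun v _ => ⟨{false}, trivial, rfl⟩)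
    rw [this]
    rw [Finset.prod_congr rfl (fun v _ => hfalse v), Finset.prod_const]
  -- tail bound on reachability
  have key : ∀ (x : Fin (d - 1) → ℤ) (h : ℕ),
      P {ω | LPReach (fun v => X v ω = false) (x, (h : ℤ))} ≤ rE ^ h * 2 := by
    intro x h
    set A : List (LPMove (d - 1)) → Set Ω := fun ms =>
      {ω | LPGood (fun v => X v ω = false) (x, (h : ℤ)) ms ∧
        (LPTrace (x, (h : ℤ)) ms).Nodup} with hA
    have hsub : {ω | LPReach (fun v => X v ω = false) (x, (h : ℤ))} ⊆ ⋃ ms, A ms := by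
      intro ω hω
      obtain ⟨ms, hms⟩ := lpreach_good hω
      obtain ⟨ms', hg', hnd'⟩ := lperase ms.length ms le_rfl hms
      exact Set.mem_iUnion.mpr ⟨ms', hg', hnd'⟩
    have hAle : ∀ ms, P (A ms) ≤ rE ^ (h + ms.length) := by
      intro ms
      rcases Set.eq_empty_or_nonempty (A ms) with hAe | hAne
      · rw [hAe, measure_empty]
        exact zero_le
      · obtain ⟨ω₀, hg₀, hnd₀⟩ := hAne
        have hcounts := lpgood_counts (c := fun v => X v ω₀ = false) hg₀
        have hsubset : A ms ⊆ ⋂ v ∈ LPUp (x, (h : ℤ)) ms, {ω | X v ω = false} := by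
          intro ω hω
          exact Set.mem_iInter₂.mpr (fun v hv => lpup_closed ms _ hω.1 v hv)
        calc P (A ms) ≤ P (⋂ v ∈ LPUp (x, (h : ℤ)) ms, {ω | X v ω = false}) :=
              measure_mono hsubset
          _ = (rE ^ 2) ^ (LPUp (x, (h : ℤ)) ms).card := hfinset _
          _ = rE ^ (2 * LPupCount ms) := by
              rw [lpup_card ms _ hnd₀, ← pow_mul]
          _ ≤ rE ^ (h + ms.length) := by
              apply pow_le_pow_right_of_le_one' hrE1
              omega
    calc P {ω | LPReach (fun v => X v ω = false) (x, (h : ℤ))}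
        ≤ P (⋃ ms, A ms) := measure_mono hsub
      _ ≤ ∑' ms, P (A ms) := measure_iUnion_le _
      _ ≤ ∑' ms : List (LPMove (d - 1)), rE ^ (h + ms.length) := ENNReal.tsum_le_tsum hAle
      _ = rE ^ h * ∑' ms : List (LPMove (d - 1)), rE ^ ms.length := by
          rw [← ENNReal.tsum_mul_left]
          exact tsum_congr (fun ms => by rw [pow_add])
      _ ≤ rE ^ h * 2 := by
          apply mul_le_mul_right
          rw [lp_tsum_list]
          have hCr : (C : ℝ≥0∞) * rE ≤ 1 / 2 := by
            rw [hrE, ← ENNReal.ofReal_natCast C, ← ENNReal.ofReal_mul (by positivity)]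
            have : (C : ℝ) * r ≤ 1 / 2 := by
              rw [hrdef]
              rw [show ((2 * C : ℕ) : ℝ) = 2 * (C : ℝ) by push_cast; ring]
              rw [mul_inv]
              have hC0 : (0:ℝ) < (C:ℝ) := by exact_mod_cast hCpos
              calc (C : ℝ) * (2⁻¹ * (C:ℝ)⁻¹) = 2⁻¹ * ((C:ℝ) * (C:ℝ)⁻¹) := by ring
                _ = 2⁻¹ := by rw [mul_inv_cancel₀ (ne_of_gt hC0), mul_one]
                _ ≤ 1 / 2 := by norm_num
            calc ENNReal.ofReal ((C:ℝ) * r) ≤ ENNReal.ofReal (1/2) :=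
                  ENNReal.ofReal_le_ofReal this
              _ = 1 / 2 := by
                  rw [ENNReal.ofReal_div_of_pos (by norm_num)]
                  norm_num
          calc (∑' n : ℕ, (C : ℝ≥0∞) ^ n * rE ^ n)
              = ∑' n : ℕ, ((C : ℝ≥0∞) * rE) ^ n := tsum_congr (fun n => (mul_pow _ _ _).symm)
            _ ≤ ∑' n : ℕ, (1 / 2 : ℝ≥0∞) ^ n :=
                ENNReal.tsum_le_tsum (fun n => pow_le_pow_left' hCr n)
            _ = (1 - 1 / 2)⁻¹ := ENNReal.tsum_geometric _
            _ = 2 := by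
                rw [one_div, ENNReal.one_sub_inv_two, inv_inv]
  -- each column is a.s. eventually unreachable
  have hbad : ∀ x : Fin (d - 1) → ℤ,
      P {ω | ∀ h : ℕ, LPReach (fun v => X v ω = false) (x, (h : ℤ))} = 0 := by
    intro x
    have hble : ∀ h : ℕ,
        P {ω | ∀ h' : ℕ, LPReach (fun v => X v ω = false) (x, (h' : ℤ))} ≤ rE ^ h * 2 := by
      intro h
      refine le_trans (measure_mono ?_) (key x h)
      intro ω hω
      exact hω h
    have htend : Tendsto (fun h : ℕ => rE ^ h * 2) atTop (nhds 0) := by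
      have h1 := ENNReal.tendsto_pow_atTop_nhds_zero_of_lt_one hrE_lt1
      have h2 := ENNReal.Tendsto.mul_const (b := (2 : ℝ≥0∞)) h1
        (Or.inr (by norm_num))
      rwa [zero_mul] at h2
    have : P {ω | ∀ h' : ℕ, LPReach (fun v => X v ω = false) (x, (h' : ℤ))} ≤ 0 :=
      ge_of_tendsto' htend hble
    exact le_antisymm this zero_le
  -- the union of bad events is null
  have hunion : P (⋃ x : Fin (d - 1) → ℤ,
      {ω | ∀ h : ℕ, LPReach (fun v => X v ω = false) (x, (h : ℤ))}) = 0 := by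
    refine le_antisymm (le_trans (measure_iUnion_le _) ?_) zero_le
    rw [tsum_congr (fun x => hbad x)]
    simp
  -- conclude
  rw [ae_iff]
  refine measure_mono_null ?_ hunion
  intro ω hω
  simp only [Set.mem_setOf_eq] at hω
  by_contra hmem
  apply hω
  simp only [Set.mem_iUnion, Set.mem_setOf_eq] at hmem
  push_neg at hmem
  have hfin : ∀ x : Fin (d - 1) → ℤ, ∃ h : ℕ,
      ¬ LPReach (fun v => X v ω = false) (x, (h : ℤ)) := hmem
  obtain ⟨F, hFlip, hFopen⟩ := lpF_exists (fun v => X v ω = false) hfin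
  exact ⟨F, hFlip, fun x => by
    have := hFopen x
    simpa using this⟩

end
end
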